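/- Let φ : V → ℝ be continuous on an open set V ⊆ ℂ², let lₙ be affine complex lines converging to an affine line l (in the sense that lₙ = {aₙ + ζvₙ}, aₙ → a, vₙ → v ≠ 0, l = {a + ζv}), and let Ω be an open set containing the compact set l ∩ {φ ≤ r}. Assume {φ ≤ r + 1} is compact and contained in V. Then there exists n₀ such that for all n ≥ n₀, lₙ ∩ {x ∈ V : φ(x) < r + 1/n} ⊆ Ω. -/

import Mathlib

noncomputable def Bform (u w : ℂ × ℂ) : ℂ :=
  u.1 * (starRingEnd ℂ) w.1 + u.2 * (starRingEnd ℂ) w.2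

lemma Bform_self_ne_zero {w : ℂ × ℂ} (hw : w ≠ 0) : Bform w w ≠ 0 := by
  have h : Bform w w = ((Complex.normSq w.1 + Complex.normSq w.2 : ℝ) : ℂ) := by
    simp [Bform, Complex.mul_conj]
  rw [h]
  norm_cast
  intro hc
  have h1 : Complex.normSq w.1 = 0 ∧ Complex.normSq w.2 = 0 := by
    constructor <;> nlinarith [Complex.normSq_nonneg w.1, Complex.normSq_nonneg w.2]
  exact hw (Prod.ext (Complex.normSq_eq_zero.mp h1.1) (Complex.normSq_eq_zero.mp h1.2))

lemma Bform_smul (ζ : ℂ) (w : ℂ × ℂ) : Bform (ζ • w) w = ζ * Bform w w := by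
  simp [Bform, Prod.smul_fst, Prod.smul_snd, smul_eq_mul]
  ring

lemma Bform_tendsto {α : Type*} {f : Filter α} {u w : α → ℂ × ℂ} {u₀ w₀ : ℂ × ℂ}
    (hu : Filter.Tendsto u f (nhds u₀)) (hw : Filter.Tendsto w f (nhds w₀)) :
    Filter.Tendsto (fun k => Bform (u k) (w k)) f (nhds (Bform u₀ w₀)) := by
  unfold Bform
  have hu1 := (continuous_fst.tendsto _).comp hu
  have hu2 := (continuous_snd.tendsto _).comp hu
  have hw1 := (continuous_fst.tendsto _).comp hw
  have hw2 := (continuous_snd.tendsto _).comp hw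
  exact ((hu1.mul ((Complex.continuous_conj.tendsto _).comp hw1)).add
    (hu2.mul ((Complex.continuous_conj.tendsto _).comp hw2)))

theorem stmt_17 (V : Set (ℂ × ℂ)) (hV : IsOpen V) (φ : ℂ × ℂ → ℝ)
    (hφ : ContinuousOn φ V) (r : ℝ)
    (hcpt : IsCompact {x ∈ V | φ x ≤ r + 1}) (hKV : {x ∈ V | φ x ≤ r + 1} ⊆ V)
    (aseq vseq : ℕ → ℂ × ℂ) (a v : ℂ × ℂ) (hv : v ≠ 0)
    (ha : Filter.Tendsto aseq Filter.atTop (nhds a))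
    (hvlim : Filter.Tendsto vseq Filter.atTop (nhds v))
    (l : ℕ → Set (ℂ × ℂ))
    (hl : ∀ n, l n = {z : ℂ × ℂ | ∃ ζ : ℂ, z = aseq n + ζ • vseq n})
    (Ω : Set (ℂ × ℂ)) (hΩ : IsOpen Ω)
    (hlΩ : {z : ℂ × ℂ | ∃ ζ : ℂ, z = a + ζ • v} ∩ {x ∈ V | φ x ≤ r} ⊆ Ω) :
    ∃ n₀ : ℕ, ∀ n ≥ n₀, l n ∩ {x ∈ V | φ x < r + 1 / n} ⊆ Ω := by
  by_contra hcon
  push_neg at hcon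
  have hfreq : ∃ᶠ n in Filter.atTop,
      ∃ x, x ∈ l n ∩ {x ∈ V | φ x < r + 1 / n} ∧ x ∉ Ω := by
    rw [Filter.frequently_atTop]
    intro n₀
    obtain ⟨n, hn, hsub⟩ := hcon n₀
    obtain ⟨x, hx, hxΩ⟩ := Set.not_subset.mp hsub
    exact ⟨n, hn, x, hx, hxΩ⟩
  obtain ⟨m, hm, hmp⟩ := Filter.extraction_of_frequently_atTop hfreq
  choose x hx hxΩ using hmp
  have hxV : ∀ n, x n ∈ V := fun n => (hx n).2.1
  have hxφ : ∀ n, φ (x n) < r + 1 / (m n) := fun n => (hx n).2.2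
  have hxl : ∀ n, ∃ ζ : ℂ, x n = aseq (m n) + ζ • vseq (m n) := by
    intro n
    have := (hx n).1
    rw [hl (m n)] at this
    exact this
  choose ζ hζ using hxl
  -- membership in compact set
  have hmem : ∀ k, x (k + 1) ∈ {x ∈ V | φ x ≤ r + 1} := by
    intro k
    refine ⟨hxV _, le_trans (le_of_lt (hxφ _)) ?_⟩
    have h1 : (1 : ℝ) ≤ (m (k + 1) : ℝ) := by
      have : 1 ≤ m (k + 1) := le_trans (Nat.succ_le_succ (Nat.zero_le k)) (hm.id_le (k + 1))
      exact_mod_cast this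
    have : (1 : ℝ) / (m (k + 1) : ℝ) ≤ 1 := by
      rw [div_le_one (lt_of_lt_of_le one_pos h1)]; exact h1
    linarith
  obtain ⟨x₀, hx₀K, ψ, hψ, hxt⟩ := hcpt.tendsto_subseq hmem
  set N : ℕ → ℕ := fun k => m (ψ k + 1) with hN
  have hNtend : Filter.Tendsto N Filter.atTop Filter.atTop :=
    hm.tendsto_atTop.comp ((hψ.add_const 1).tendsto_atTop)
  have hat : Filter.Tendsto (fun k => aseq (N k)) Filter.atTop (nhds a) := ha.comp hNtend
  have hvt : Filter.Tendsto (fun k => vseq (N k)) Filter.atTop (nhds v) := hvlim.comp hNtend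
  have hxt' : Filter.Tendsto (fun k => x (ψ k + 1)) Filter.atTop (nhds x₀) := hxt
  have hdiff : Filter.Tendsto (fun k => x (ψ k + 1) - aseq (N k)) Filter.atTop
      (nhds (x₀ - a)) := hxt'.sub hat
  set ζ₀ : ℂ := Bform (x₀ - a) v / Bform v v with hζ₀
  have hBvv : Bform v v ≠ 0 := Bform_self_ne_zero hv
  have hQ : Filter.Tendsto
      (fun k => Bform (x (ψ k + 1) - aseq (N k)) (vseq (N k)) / Bform (vseq (N k)) (vseq (N k)))
      Filter.atTop (nhds ζ₀) :=
    (Bform_tendsto hdiff hvt).div (Bform_tendsto hvt hvt) hBvv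
  have hev : ∀ᶠ k in Filter.atTop, Bform (vseq (N k)) (vseq (N k)) ≠ 0 :=
    (Bform_tendsto hvt hvt).eventually_ne hBvv
  have hζt : Filter.Tendsto (fun k => ζ (ψ k + 1)) Filter.atTop (nhds ζ₀) := by
    refine hQ.congr' ?_
    filter_upwards [hev] with k hk
    have h1 : x (ψ k + 1) - aseq (N k) = ζ (ψ k + 1) • vseq (N k) := by
      rw [hζ (ψ k + 1)]; abel
    rw [h1, Bform_smul, mul_div_assoc, div_self hk, mul_one]
  -- identify x₀
  have hx₀eq : x₀ = a + ζ₀ • v := by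
    have h2 : Filter.Tendsto (fun k => aseq (N k) + ζ (ψ k + 1) • vseq (N k))
        Filter.atTop (nhds (a + ζ₀ • v)) := hat.add (hζt.smul hvt)
    have h3 : (fun k => aseq (N k) + ζ (ψ k + 1) • vseq (N k)) = fun k => x (ψ k + 1) := by
      funext k; rw [hζ (ψ k + 1)]
    rw [h3] at h2
    exact tendsto_nhds_unique hxt' h2
  have hx₀V : x₀ ∈ V := hx₀K.1
  -- φ x₀ ≤ r
  have hφt : Filter.Tendsto (fun k => φ (x (ψ k + 1))) Filter.atTop (nhds (φ x₀)) :=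
    ((hφ.continuousAt (hV.mem_nhds hx₀V)).tendsto).comp hxt'
  have hrt : Filter.Tendsto (fun k => r + 1 / (N k : ℝ)) Filter.atTop (nhds r) := by
    have := (tendsto_one_div_atTop_nhds_zero_nat (𝕜 := ℝ)).comp hNtend
    simpa using (tendsto_const_nhds.add this)
  have hφx₀ : φ x₀ ≤ r := by
    refine le_of_tendsto_of_tendsto' hφt hrt fun k => le_of_lt (hxφ (ψ k + 1))
  have hx₀Ω : x₀ ∈ Ω := hlΩ ⟨⟨ζ₀, hx₀eq⟩, hx₀V, hφx₀⟩
  obtain ⟨k, hk⟩ := (hxt'.eventually (hΩ.mem_nhds hx₀Ω)).exists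
  exact hxΩ (ψ k + 1) hk
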